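/- Fix N ≥ 1 and consider the MDP with state space S = {1,…,N}, action space A = {1,…,N}, and deterministic transitions P(s'|s,a) = 1 if s' = a and 0 otherwise (from every state, action a leads to state a). Let μ = δ_1 be the Dirac distribution on state 1. Then for every probability distribution ν on S and every constant c such that (μ P_π)(s) ≤ c ν(s) for all deterministic policies π and all states s, one has c ≥ N. Consequently sup_π ‖μ P_π/ν‖_∞ ≥ N for every ν, and since N is arbitrary there is in general no ν making the coefficient sup_π ‖μ P_π/ν‖_∞ bounded uniformly in the MDP. -/
import Mathlib


open Matrix Filter Topology

section MDPdefs

variable {S A : Type*}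

/-- `P` is a transition kernel: nonnegative and each row sums to one. -/
def IsKernel [Fintype S] (P : S → A → S → ℝ) : Prop :=
  ∀ s a, (∀ s', 0 ≤ P s a s') ∧ ∑ s', P s a s' = 1

/-- A stochastic policy: a probability distribution over actions in each state. -/
def IsPolicy [Fintype A] (π : S → A → ℝ) : Prop :=
  ∀ s, (∀ a, 0 ≤ π s a) ∧ ∑ a, π s a = 1

/-- A probability distribution over states. -/
def IsDist [Fintype S] (μ : S → ℝ) : Prop :=
  (∀ s, 0 ≤ μ s) ∧ ∑ s, μ s = 1

/-- The reward vector `r_π(s) = ∑_a π(a|s) r(s,a)`. -/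
def rPol [Fintype A] (r : S → A → ℝ) (π : S → A → ℝ) : S → ℝ :=
  fun s => ∑ a, π s a * r s a

/-- The stochastic matrix `P_π(s,s') = ∑_a π(a|s) P(s'|s,a)`. -/
def PPol [Fintype A] (P : S → A → S → ℝ) (π : S → A → ℝ) : Matrix S S ℝ :=
  Matrix.of fun s s' => ∑ a, π s a * P s a s'

/-- The Bellman operator `T_π v = r_π + γ P_π v`. -/
noncomputable def bellman [Fintype S] [Fintype A] (P : S → A → S → ℝ) (r : S → A → ℝ)
    (γ : ℝ) (π : S → A → ℝ) (v : S → ℝ) : S → ℝ :=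
  rPol r π + γ • (PPol P π *ᵥ v)

/-- The optimal Bellman operator `(Tv)(s) = max_a [r(s,a) + γ ∑_{s'} P(s'|s,a) v(s')]`. -/
noncomputable def optBellman [Fintype S] [Fintype A] [Nonempty A] (P : S → A → S → ℝ)
    (r : S → A → ℝ) (γ : ℝ) (v : S → ℝ) : S → ℝ :=
  fun s => Finset.univ.sup' Finset.univ_nonempty fun a => r s a + γ * ∑ s', P s a s' * v s'

/-- The value function of policy `π`, `v_π = (I - γ P_π)⁻¹ r_π`, the unique solution of
`v = r_π + γ P_π v` when `0 ≤ γ < 1`. -/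
noncomputable def valueFn [Fintype S] [Fintype A] [DecidableEq S] (P : S → A → S → ℝ)
    (r : S → A → ℝ) (γ : ℝ) (π : S → A → ℝ) : S → ℝ :=
  ((1 : Matrix S S ℝ) - γ • PPol P π)⁻¹ *ᵥ rPol r π

/-- The γ-weighted occupancy measure `d_{μ,π} = (1-γ) μ (I - γ P_π)⁻¹` (a row vector). -/
noncomputable def occ [Fintype S] [Fintype A] [DecidableEq S] (P : S → A → S → ℝ)
    (γ : ℝ) (μ : S → ℝ) (π : S → A → ℝ) : S → ℝ :=
  (1 - γ) • (μ ᵥ* ((1 : Matrix S S ℝ) - γ • PPol P π)⁻¹)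

/-- The stochastic mixture `(1-α)π + απ'`. -/
def mix (α : ℝ) (π π' : S → A → ℝ) : S → A → ℝ :=
  fun s a => (1 - α) * π s a + α * π' s a

/-- The `ν`-greedy-complexity `E_ν(Π) = sup_{ρ∈Π} inf_{ρ'∈Π} d_{ν,ρ}·(T v_ρ - T_{ρ'} v_ρ)`. -/
noncomputable def greedyCplx [Fintype S] [Fintype A] [Nonempty A] [DecidableEq S]
    (P : S → A → S → ℝ) (r : S → A → ℝ) (γ : ℝ) (ν : S → ℝ)
    (Pol : Set (S → A → ℝ)) : ℝ :=
  ⨆ ρ : Pol, ⨅ ρ' : Pol,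
    occ P γ ν (ρ : S → A → ℝ) ⬝ᵥ
      (optBellman P r γ (valueFn P r γ (ρ : S → A → ℝ)) -
        bellman P r γ (ρ' : S → A → ℝ) (valueFn P r γ (ρ : S → A → ℝ)))

/-- `π` is an `ε`-local optimum of `J_ν` over `Pol`: for every `π' ∈ Pol`, the (one-sided)
limit of `(ν·v_{(1-α)π+απ'} - ν·v_π)/α` as `α → 0⁺` exists and is at most `ε`. -/
def IsLocalOpt [Fintype S] [Fintype A] [DecidableEq S]
    (P : S → A → S → ℝ) (r : S → A → ℝ) (γ : ℝ) (ν : S → ℝ)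
    (Pol : Set (S → A → ℝ)) (π : S → A → ℝ) (ε : ℝ) : Prop :=
  ∀ π' ∈ Pol, ∃ L ≤ ε,
    Tendsto (fun α : ℝ =>
        (ν ⬝ᵥ valueFn P r γ (mix α π π') - ν ⬝ᵥ valueFn P r γ π) / α)
      (𝓝[>] 0) (𝓝 L)

end MDPdefs

/-- in the MDP on `Fin N` where action `a` deterministically leads to state `a`,
with `μ = δ_0`, any `c` with `(μ P_π)(s) ≤ c ν(s)` for all deterministic `π` and states `s`
must satisfy `c ≥ N`. -/
theorem stmt_6 (N : ℕ) (hN : 1 ≤ N) (ν : Fin N → ℝ) (hν : IsDist ν) (c : ℝ)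
    (hc : ∀ f : Fin N → Fin N, ∀ s : Fin N,
      ((fun s₀ : Fin N => if s₀ = (⟨0, hN⟩ : Fin N) then (1 : ℝ) else 0) ᵥ*
          PPol (fun _ a s' => if s' = a then (1 : ℝ) else 0)
            (fun s a => if a = f s then (1 : ℝ) else 0)) s
        ≤ c * ν s) :
    (N : ℝ) ≤ c := by
  have key : ∀ t : Fin N, (1 : ℝ) ≤ c * ν t := by
    intro t
    have h := hc (fun _ => t) t
    simpa [Matrix.vecMul, PPol, dotProduct, ite_and, eq_comm,
      Finset.sum_ite_eq', Finset.sum_ite_eq] using h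
  calc (N : ℝ) = ∑ _t : Fin N, (1 : ℝ) := by simp
    _ ≤ ∑ t : Fin N, c * ν t := Finset.sum_le_sum fun t _ => key t
    _ = c * ∑ t, ν t := by rw [Finset.mul_sum]
    _ = c := by rw [hν.2, mul_one]
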